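/- arXiv:2512.20682 — 5 statements merged into one kernel-verified Lean document; each statement's English description precedes it below -/
import Mathlib

section
/- Let f : ℝ → ℝ be convex, a < b, g_a := max ∂f(a) < 0 < min ∂f(b) =: g_b, and let ξ be the intersection of the two supporting lines. If ξ is not a global minimizer of f, then f(a) + g_a(ξ - a) < f(ξ); i.e., the point (ξ, f(ξ)) lies strictly above both supporting lines. -/
def SubdifferentialAt (f : ℝ → ℝ) (a : ℝ) : Set ℝ :=
  {g : ℝ | ∀ x : ℝ, f a + g * (x - a) ≤ f x}

theorem stmt_4 (f : ℝ → ℝ) (hf : ConvexOn ℝ Set.univ f)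
    (a b ga gb ξ : ℝ) (hab : a < b)
    (hga : IsGreatest (SubdifferentialAt f a) ga)
    (hgb : IsLeast (SubdifferentialAt f b) gb)
    (hga0 : ga < 0) (hgb0 : 0 < gb)
    (hξ : f a + ga * (ξ - a) = f b + gb * (ξ - b))
    (h0 : 0 ∉ SubdifferentialAt f ξ) :
    f a + ga * (ξ - a) < f ξ ∧ f b + gb * (ξ - b) < f ξ := by
  have h1 : f a + ga * (ξ - a) ≤ f ξ := hga.1 ξ
  have h2 : f b + gb * (ξ - b) ≤ f ξ := hgb.1 ξ
  rcases lt_or_eq_of_le h1 with h | h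
  · exact ⟨h, hξ ▸ h⟩
  · exfalso
    apply h0
    intro x
    rcases le_or_gt x ξ with hx | hx
    · have := hga.1 x
      nlinarith [mul_nonneg (le_of_lt (neg_pos.2 hga0)) (sub_nonneg.2 hx)]
    · have := hgb.1 x
      nlinarith [mul_nonneg (le_of_lt hgb0) (sub_nonneg.2 hx.le)]
end

section
/- Let f : ℝ → ℝ be given as f(x) = max over a finite index set I of affine functions f_i(x) = s_i x + c_i, with a < b, g_a := max ∂f(a) < 0 < min ∂f(b) =: g_b, and let ξ be the intersection of the supporting lines at a and b. Then either 0 ∈ ∂f(ξ), or f(ξ) = max_{i ∈ I \ A} f_i(ξ), where A := {i : f_i(a) = f(a)} ∪ {i : f_i(b) = f(b)}. -/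
theorem stmt_5 {ι : Type*} [Fintype ι] [Nonempty ι]
    (s c : ι → ℝ) (f : ℝ → ℝ)
    (hfdef : ∀ x : ℝ, f x = Finset.univ.sup' Finset.univ_nonempty (fun i => s i * x + c i))
    (a b ga gb ξ : ℝ) (hab : a < b)
    (hga : IsGreatest (SubdifferentialAt f a) ga)
    (hgb : IsLeast (SubdifferentialAt f b) gb)
    (hga0 : ga < 0) (hgb0 : 0 < gb)
    (hξ : f a + ga * (ξ - a) = f b + gb * (ξ - b)) :
    0 ∈ SubdifferentialAt f ξ ∨
      ∃ i ∉ ({i | s i * a + c i = f a} ∪ {i | s i * b + c i = f b} : Set ι),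
        s i * ξ + c i = f ξ := by
  have hle : ∀ i x, s i * x + c i ≤ f x := fun i x => by
    rw [hfdef]; exact Finset.le_sup' (fun i => s i * x + c i) (Finset.mem_univ i)
  have hgaf : ∀ x, f a + ga * (x - a) ≤ f x := hga.1
  have hgbf : ∀ x, f b + gb * (x - b) ≤ f x := hgb.1
  have haξ : a ≤ ξ := by nlinarith [hgbf a]
  have hξb : ξ ≤ b := by nlinarith [hgaf b]
  rcases eq_or_lt_of_le (hgaf ξ) with heq | hlt
  · left
    intro x
    rcases le_total x ξ with h | h
    · nlinarith [hgaf x]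
    · nlinarith [hgbf x]
  · right
    obtain ⟨i, -, hi⟩ := Finset.exists_mem_eq_sup' (Finset.univ_nonempty (α := ι))
      (fun i => s i * ξ + c i)
    have hfi : s i * ξ + c i = f ξ := by rw [hfdef ξ, hi]
    refine ⟨i, ?_, hfi⟩
    rintro (h | h)
    · have hmem : ga ∈ upperBounds (SubdifferentialAt f a) := hga.2
      have hsi : s i ≤ ga := hmem (fun x => by
        simp only [Set.mem_setOf_eq] at h ⊢
        have := hle i x
        nlinarith)
      simp only [Set.mem_setOf_eq] at h
      nlinarith [mul_nonneg (sub_nonneg.2 hsi) (sub_nonneg.2 haξ)]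
    · have hmem : gb ∈ lowerBounds (SubdifferentialAt f b) := hgb.2
      have hsi : gb ≤ s i := hmem (fun x => by
        simp only [Set.mem_setOf_eq] at h ⊢
        have := hle i x
        nlinarith)
      simp only [Set.mem_setOf_eq] at h
      nlinarith [mul_nonneg (sub_nonneg.2 hsi) (sub_nonneg.2 hξb)]
end

section
/- Let f : ℝ → ℝ be a convex piecewise affine function expressed as the maximum of finitely many affine functions. Then the PALB subdivision iteration — starting from a < b with max ∂f(a) < 0 < min ∂f(b), repeatedly computing the intersection ξ of the endpoint supporting lines and replacing the endpoint whose subgradient sign matches sign(∂f(ξ)) — terminates with a point ξ with 0 ∈ ∂f(ξ) after at most |I| iterations, where |I| is the number of affine pieces. -/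
section PALBaux
variable {ι : Type*} [Fintype ι] [Nonempty ι]

theorem PALB.lem_le (s c : ι → ℝ) (f : ℝ → ℝ)
    (hfdef : ∀ x : ℝ, f x = Finset.univ.sup' Finset.univ_nonempty (fun i => s i * x + c i))
    (i : ι) (x : ℝ) : s i * x + c i ≤ f x := by
  rw [hfdef]
  exact Finset.le_sup' (fun i => s i * x + c i) (Finset.mem_univ i)

theorem PALB.lem_act (s c : ι → ℝ) (f : ℝ → ℝ)
    (hfdef : ∀ x : ℝ, f x = Finset.univ.sup' Finset.univ_nonempty (fun i => s i * x + c i))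
    (x : ℝ) : ∃ i, s i * x + c i = f x := by
  obtain ⟨i, -, hi⟩ := Finset.exists_mem_eq_sup' (Finset.univ_nonempty (α := ι))
    (fun i => s i * x + c i)
  exact ⟨i, by rw [hfdef, hi]⟩

theorem PALB.lem_mem (s c : ι → ℝ) (f : ℝ → ℝ)
    (hfdef : ∀ x : ℝ, f x = Finset.univ.sup' Finset.univ_nonempty (fun i => s i * x + c i))
    {i : ι} {x : ℝ} (hi : s i * x + c i = f x) : s i ∈ SubdifferentialAt f x := by
  intro z
  have := PALB.lem_le s c f hfdef i z
  nlinarith [this]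

theorem PALB.lem_ub (s c : ι → ℝ) (f : ℝ → ℝ)
    (hfdef : ∀ x : ℝ, f x = Finset.univ.sup' Finset.univ_nonempty (fun i => s i * x + c i))
    {x M g : ℝ} (hM : ∀ i, s i * x + c i = f x → s i ≤ M)
    (hg : g ∈ SubdifferentialAt f x) : g ≤ M := by
  classical
  have hle := PALB.lem_le s c f hfdef
  set δ : ι → ℝ := fun i => if s i ≤ M then 1 else (f x - (s i * x + c i)) / (s i - M) with hδ
  set t : ℝ := Finset.univ.inf' Finset.univ_nonempty δ with htdef
  have hδpos : ∀ i, 0 < δ i := by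
    intro i
    by_cases h : s i ≤ M
    · simp [hδ, h]
    · have hsi : M < s i := not_le.mp h
      have hne : s i * x + c i ≠ f x := fun hc => h (hM i hc)
      have hlt : s i * x + c i < f x := lt_of_le_of_ne (hle i x) hne
      simp only [hδ, if_neg h]
      exact div_pos (by linarith) (by linarith)
  have ht : 0 < t := by
    rw [htdef, Finset.lt_inf'_iff]
    exact fun i _ => hδpos i
  have hbound : ∀ i : ι, s i * (x + t) + c i ≤ f x + M * t := by
    intro i
    have htle : t ≤ δ i := Finset.inf'_le δ (Finset.mem_univ i)
    by_cases h : s i ≤ M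
    · have := hle i x
      nlinarith
    · have hsi : M < s i := not_le.mp h
      have hne : s i * x + c i ≠ f x := fun hc => h (hM i hc)
      have hlt : s i * x + c i < f x := lt_of_le_of_ne (hle i x) hne
      have hδi : δ i = (f x - (s i * x + c i)) / (s i - M) := by simp [hδ, h]
      rw [hδi] at htle
      have h2 : t * (s i - M) ≤ f x - (s i * x + c i) :=
        (le_div_iff₀ (by linarith)).mp htle
      nlinarith
  have hft : f (x + t) ≤ f x + M * t := by
    rw [hfdef]
    exact Finset.sup'_le _ _ (fun i _ => hbound i)
  have := hg (x + t)
  nlinarith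

theorem PALB.lem_lb (s c : ι → ℝ) (f : ℝ → ℝ)
    (hfdef : ∀ x : ℝ, f x = Finset.univ.sup' Finset.univ_nonempty (fun i => s i * x + c i))
    {x m g : ℝ} (hm : ∀ i, s i * x + c i = f x → m ≤ s i)
    (hg : g ∈ SubdifferentialAt f x) : m ≤ g := by
  classical
  have hle := PALB.lem_le s c f hfdef
  set δ : ι → ℝ := fun i => if m ≤ s i then 1 else (f x - (s i * x + c i)) / (m - s i) with hδ
  set t : ℝ := Finset.univ.inf' Finset.univ_nonempty δ with htdef
  have hδpos : ∀ i, 0 < δ i := by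
    intro i
    by_cases h : m ≤ s i
    · simp [hδ, h]
    · have hsi : s i < m := not_le.mp h
      have hne : s i * x + c i ≠ f x := fun hc => h (hm i hc)
      have hlt : s i * x + c i < f x := lt_of_le_of_ne (hle i x) hne
      simp only [hδ, if_neg h]
      exact div_pos (by linarith) (by linarith)
  have ht : 0 < t := by
    rw [htdef, Finset.lt_inf'_iff]
    exact fun i _ => hδpos i
  have hbound : ∀ i : ι, s i * (x - t) + c i ≤ f x - m * t := by
    intro i
    have htle : t ≤ δ i := Finset.inf'_le δ (Finset.mem_univ i)
    by_cases h : m ≤ s i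
    · have := hle i x
      nlinarith
    · have hsi : s i < m := not_le.mp h
      have hne : s i * x + c i ≠ f x := fun hc => h (hm i hc)
      have hlt : s i * x + c i < f x := lt_of_le_of_ne (hle i x) hne
      have hδi : δ i = (f x - (s i * x + c i)) / (m - s i) := by simp [hδ, h]
      rw [hδi] at htle
      have h2 : t * (m - s i) ≤ f x - (s i * x + c i) :=
        (le_div_iff₀ (by linarith)).mp htle
      nlinarith
  have hft : f (x - t) ≤ f x - m * t := by
    rw [hfdef]
    exact Finset.sup'_le _ _ (fun i _ => hbound i)
  have := hg (x - t)
  nlinarith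

/-- The max active slope is the greatest subgradient, and equals `sSup`. -/
theorem PALB.lem_greatest (s c : ι → ℝ) (f : ℝ → ℝ)
    (hfdef : ∀ x : ℝ, f x = Finset.univ.sup' Finset.univ_nonempty (fun i => s i * x + c i))
    (x : ℝ) : ∃ i, s i * x + c i = f x ∧
      IsGreatest (SubdifferentialAt f x) (s i) ∧ sSup (SubdifferentialAt f x) = s i := by
  classical
  set A : Finset ι := Finset.univ.filter (fun i => s i * x + c i = f x) with hA
  have hAne : A.Nonempty := by
    obtain ⟨i, hi⟩ := PALB.lem_act s c f hfdef x
    exact ⟨i, by simp [hA, hi]⟩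
  obtain ⟨i, hiA, hmax⟩ := A.exists_max_image s hAne
  have hiact : s i * x + c i = f x := by simpa [hA] using hiA
  have hgr : IsGreatest (SubdifferentialAt f x) (s i) := by
    refine ⟨PALB.lem_mem s c f hfdef hiact, fun g hg => ?_⟩
    exact PALB.lem_ub s c f hfdef (fun j hj => hmax j (by simp [hA, hj])) hg
  exact ⟨i, hiact, hgr, hgr.csSup_eq⟩

theorem PALB.lem_least (s c : ι → ℝ) (f : ℝ → ℝ)
    (hfdef : ∀ x : ℝ, f x = Finset.univ.sup' Finset.univ_nonempty (fun i => s i * x + c i))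
    (x : ℝ) : ∃ i, s i * x + c i = f x ∧
      IsLeast (SubdifferentialAt f x) (s i) ∧ sInf (SubdifferentialAt f x) = s i := by
  classical
  set A : Finset ι := Finset.univ.filter (fun i => s i * x + c i = f x) with hA
  have hAne : A.Nonempty := by
    obtain ⟨i, hi⟩ := PALB.lem_act s c f hfdef x
    exact ⟨i, by simp [hA, hi]⟩
  obtain ⟨i, hiA, hmin⟩ := A.exists_min_image s hAne
  have hiact : s i * x + c i = f x := by simpa [hA] using hiA
  have hgr : IsLeast (SubdifferentialAt f x) (s i) := by
    refine ⟨PALB.lem_mem s c f hfdef hiact, fun g hg => ?_⟩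
    exact PALB.lem_lb s c f hfdef (fun j hj => hmin j (by simp [hA, hj])) hg
  exact ⟨i, hiact, hgr, hgr.csInf_eq⟩

theorem PALB.zero_mem (s c : ι → ℝ) (f : ℝ → ℝ)
    (hfdef : ∀ x : ℝ, f x = Finset.univ.sup' Finset.univ_nonempty (fun i => s i * x + c i))
    {x : ℝ} (h1 : sInf (SubdifferentialAt f x) ≤ 0) (h2 : 0 ≤ sSup (SubdifferentialAt f x)) :
    0 ∈ SubdifferentialAt f x := by
  obtain ⟨i, hiact, -, hieq⟩ := PALB.lem_greatest s c f hfdef x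
  obtain ⟨j, hjact, -, hjeq⟩ := PALB.lem_least s c f hfdef x
  rw [hieq] at h2
  rw [hjeq] at h1
  intro z
  rcases le_total x z with hz | hz
  · have := PALB.lem_le s c f hfdef i z
    nlinarith
  · have := PALB.lem_le s c f hfdef j z
    nlinarith

end PALBaux

theorem PALB.key_a (f : ℝ → ℝ) (x y ξ : ℝ)
    (hGx : sSup (SubdifferentialAt f x) ∈ SubdifferentialAt f x)
    (hGξ : IsGreatest (SubdifferentialAt f ξ) (sSup (SubdifferentialAt f ξ)))
    (hLy : sInf (SubdifferentialAt f y) ∈ SubdifferentialAt f y)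
    (hax : sSup (SubdifferentialAt f x) < 0)
    (hby : 0 < sInf (SubdifferentialAt f y))
    (heq : f x + sSup (SubdifferentialAt f x) * (ξ - x)
         = f y + sInf (SubdifferentialAt f y) * (ξ - y))
    (hMξ : sSup (SubdifferentialAt f ξ) < 0) :
    sSup (SubdifferentialAt f x) < sSup (SubdifferentialAt f ξ) := by
  set g := sSup (SubdifferentialAt f x)
  set gb := sInf (SubdifferentialAt f y)
  set h := sSup (SubdifferentialAt f ξ)
  by_contra hcon
  push_neg at hcon
  have hx1 : f y + gb * (x - y) ≤ f x := hLy x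
  have hxξ : x ≤ ξ := by nlinarith
  have hle1 : f ξ + h * (x - ξ) ≤ f x := hGξ.1 x
  have hge1 : f y + gb * (ξ - y) ≤ f ξ := hLy ξ
  have feq : f ξ = f y + gb * (ξ - y) := by nlinarith
  have hgbmem : gb ∈ SubdifferentialAt f ξ := by
    intro z
    have := hLy z
    nlinarith
  have := hGξ.2 hgbmem
  linarith

theorem PALB.key_b (f : ℝ → ℝ) (x y ξ : ℝ)
    (hGx : sSup (SubdifferentialAt f x) ∈ SubdifferentialAt f x)
    (hLξ : IsLeast (SubdifferentialAt f ξ) (sInf (SubdifferentialAt f ξ)))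
    (hax : sSup (SubdifferentialAt f x) < 0)
    (hby : 0 < sInf (SubdifferentialAt f y))
    (heq : f x + sSup (SubdifferentialAt f x) * (ξ - x)
         = f y + sInf (SubdifferentialAt f y) * (ξ - y))
    (hmξ : 0 < sInf (SubdifferentialAt f ξ)) :
    sInf (SubdifferentialAt f ξ) < sInf (SubdifferentialAt f y) := by
  set g := sSup (SubdifferentialAt f x)
  set gb := sInf (SubdifferentialAt f y)
  set h := sInf (SubdifferentialAt f ξ)
  by_contra hcon
  push_neg at hcon
  have hy1 : f x + g * (y - x) ≤ f y := hGx y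
  have hξy : ξ ≤ y := by nlinarith
  have hle1 : f ξ + h * (y - ξ) ≤ f y := hLξ.1 y
  have hge1 : f x + g * (ξ - x) ≤ f ξ := hGx ξ
  have feq : f ξ = f x + g * (ξ - x) := by nlinarith
  have hgmem : g ∈ SubdifferentialAt f ξ := by
    intro z
    have := hGx z
    nlinarith
  have := hLξ.2 hgmem
  linarith

theorem stmt_14 {ι : Type*} [Fintype ι] [Nonempty ι]
    (s c : ι → ℝ) (f : ℝ → ℝ)
    (hfdef : ∀ x : ℝ, f x = Finset.univ.sup' Finset.univ_nonempty (fun i => s i * x + c i))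
    (a b ξ : ℕ → ℝ)
    (h0 : a 0 < b 0)
    (hga0 : sSup (SubdifferentialAt f (a 0)) < 0)
    (hgb0 : 0 < sInf (SubdifferentialAt f (b 0)))
    (hξ : ∀ k : ℕ,
      f (a k) + sSup (SubdifferentialAt f (a k)) * (ξ k - a k) =
        f (b k) + sInf (SubdifferentialAt f (b k)) * (ξ k - b k))
    (ha : ∀ k : ℕ, a (k + 1) = if sSup (SubdifferentialAt f (ξ k)) < 0 then ξ k else a k)
    (hb : ∀ k : ℕ, b (k + 1) = if 0 < sInf (SubdifferentialAt f (ξ k)) then ξ k else b k) :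
    ∃ k < Fintype.card ι, 0 ∈ SubdifferentialAt f (ξ k) := by
  classical
  by_contra hcon
  push_neg at hcon
  set n := Fintype.card ι with hn
  -- greatest / least facts
  have hG : ∀ x : ℝ, IsGreatest (SubdifferentialAt f x) (sSup (SubdifferentialAt f x)) ∧
      ∃ i, s i * x + c i = f x ∧ sSup (SubdifferentialAt f x) = s i := by
    intro x
    obtain ⟨i, hiact, hgr, heq⟩ := PALB.lem_greatest s c f hfdef x
    exact ⟨heq ▸ hgr, i, hiact, heq⟩
  have hL : ∀ x : ℝ, IsLeast (SubdifferentialAt f x) (sInf (SubdifferentialAt f x)) ∧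
      ∃ i, s i * x + c i = f x ∧ sInf (SubdifferentialAt f x) = s i := by
    intro x
    obtain ⟨i, hiact, hgr, heq⟩ := PALB.lem_least s c f hfdef x
    exact ⟨heq ▸ hgr, i, hiact, heq⟩
  have hIS : ∀ x : ℝ, sInf (SubdifferentialAt f x) ≤ sSup (SubdifferentialAt f x) := fun x =>
    (hG x).1.2 (hL x).1.1
  set C : ℕ → Finset ι := fun k => Finset.univ.filter
    (fun i => s i ≤ sSup (SubdifferentialAt f (a k)) ∨ sInf (SubdifferentialAt f (b k)) ≤ s i)
    with hC
  have main : ∀ k : ℕ, k ≤ n →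
      sSup (SubdifferentialAt f (a k)) < 0 ∧ 0 < sInf (SubdifferentialAt f (b k)) ∧
      k + 2 ≤ (C k).card := by
    intro k
    induction k with
    | zero =>
      intro _
      refine ⟨hga0, hgb0, ?_⟩
      obtain ⟨-, i, -, hieq⟩ := hG (a 0)
      obtain ⟨-, j, -, hjeq⟩ := hL (b 0)
      have hiC : i ∈ C 0 := by
        simp only [hC, Finset.mem_filter, Finset.mem_univ, true_and]
        exact Or.inl hieq.ge
      have hjC : j ∈ C 0 := by
        simp only [hC, Finset.mem_filter, Finset.mem_univ, true_and]
        exact Or.inr hjeq.le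
      have hij : i ≠ j := by
        intro hij
        rw [hij, ← hjeq] at hieq
        linarith
      have : 1 < (C 0).card := Finset.one_lt_card.mpr ⟨i, hiC, j, hjC, hij⟩
      omega
    | succ k ih =>
      intro hk
      obtain ⟨hA, hB, hcard⟩ := ih (Nat.le_of_succ_le hk)
      have hstop := hcon k (by omega)
      -- trichotomy at ξ k
      have htri : sSup (SubdifferentialAt f (ξ k)) < 0 ∨ 0 < sInf (SubdifferentialAt f (ξ k)) := by
        by_contra hno
        push_neg at hno
        exact hstop (PALB.zero_mem s c f hfdef hno.2 hno.1)
      rcases htri with hM | hm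
      · -- update a
        have hnotm : ¬ 0 < sInf (SubdifferentialAt f (ξ k)) := by
          have := hIS (ξ k); intro hcon2; linarith
        have ha' : a (k + 1) = ξ k := by rw [ha k, if_pos hM]
        have hb' : b (k + 1) = b k := by rw [hb k, if_neg hnotm]
        have hkey : sSup (SubdifferentialAt f (a k)) < sSup (SubdifferentialAt f (ξ k)) :=
          PALB.key_a f (a k) (b k) (ξ k) (hG (a k)).1.1 (hG (ξ k)).1 (hL (b k)).1.1
            hA hB (hξ k) hM
        refine ⟨by rw [ha']; exact hM, by rw [hb']; exact hB, ?_⟩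
        obtain ⟨-, i, -, hieq⟩ := hG (ξ k)
        have hiC : i ∈ C (k + 1) := by
          simp only [hC, Finset.mem_filter, Finset.mem_univ, true_and]
          rw [ha']
          exact Or.inl hieq.ge
        have hinot : i ∉ C k := by
          simp only [hC, Finset.mem_filter, Finset.mem_univ, true_and]
          push_neg
          rw [← hieq]
          exact ⟨hkey, hM.trans hB⟩
        have hsub : C k ⊆ C (k + 1) := by
          intro j hj
          simp only [hC, Finset.mem_filter, Finset.mem_univ, true_and] at hj ⊢
          rw [ha', hb']
          rcases hj with hj | hj
          · exact Or.inl (le_trans hj hkey.le)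
          · exact Or.inr hj
        have : insert i (C k) ⊆ C (k + 1) := Finset.insert_subset hiC hsub
        have hcard2 : (C k).card + 1 ≤ (C (k + 1)).card := by
          calc (C k).card + 1 = (insert i (C k)).card := (Finset.card_insert_of_notMem hinot).symm
          _ ≤ (C (k + 1)).card := Finset.card_le_card this
        omega
      · -- update b
        have hnotM : ¬ sSup (SubdifferentialAt f (ξ k)) < 0 := by
          have := hIS (ξ k); intro hcon2; linarith
        have ha' : a (k + 1) = a k := by rw [ha k, if_neg hnotM]
        have hb' : b (k + 1) = ξ k := by rw [hb k, if_pos hm]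
        have hkey : sInf (SubdifferentialAt f (ξ k)) < sInf (SubdifferentialAt f (b k)) :=
          PALB.key_b f (a k) (b k) (ξ k) (hG (a k)).1.1 (hL (ξ k)).1
            hA hB (hξ k) hm
        refine ⟨by rw [ha']; exact hA, by rw [hb']; exact hm, ?_⟩
        obtain ⟨-, i, -, hieq⟩ := hL (ξ k)
        have hiC : i ∈ C (k + 1) := by
          simp only [hC, Finset.mem_filter, Finset.mem_univ, true_and]
          rw [hb']
          exact Or.inr hieq.le
        have hinot : i ∉ C k := by
          simp only [hC, Finset.mem_filter, Finset.mem_univ, true_and]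
          push_neg
          rw [← hieq]
          exact ⟨hA.trans hm, hkey⟩
        have hsub : C k ⊆ C (k + 1) := by
          intro j hj
          simp only [hC, Finset.mem_filter, Finset.mem_univ, true_and] at hj ⊢
          rw [ha', hb']
          rcases hj with hj | hj
          · exact Or.inl hj
          · exact Or.inr (le_trans hkey.le hj)
        have : insert i (C k) ⊆ C (k + 1) := Finset.insert_subset hiC hsub
        have hcard2 : (C k).card + 1 ≤ (C (k + 1)).card := by
          calc (C k).card + 1 = (insert i (C k)).card := (Finset.card_insert_of_notMem hinot).symm
          _ ≤ (C (k + 1)).card := Finset.card_le_card this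
        omega
  obtain ⟨-, -, hcard⟩ := main n le_rfl
  have : (C n).card ≤ n := by
    rw [hn]
    exact le_trans (Finset.card_le_card (Finset.filter_subset _ _)) (by simp)
  omega
end

section
/- Outside the finitely many points where two of the dual lines t_i(m) = y_i - m x_i intersect, the function J(m) = min_t Σ_i |m x_i + t - y_i| is differentiable with derivative J'(m) = Σ_{i ∈ I_+} x_i − Σ_{i ∈ I_−} x_i, where I_± = {i : m x_i + t*(m) − y_i ≷ 0} and t*(m) is the (locally unique) median of {y_i − m x_i}. -/
open Finset

noncomputable def esign {N : ℕ} (a : Fin N → ℝ) (t : ℝ) (i : Fin N) : ℝ :=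
  (if a i < t then 1 else 0) - (if t < a i then 1 else 0)

lemma pert {N : ℕ} (a : Fin N → ℝ) (t h : ℝ)
    (hh : ∀ i, a i ≠ t → |h| < |t - a i|) :
    ∑ i, |t + h - a i| = (∑ i, |t - a i|) + h * (∑ i, esign a t i)
      + |h| * ((univ.filter (fun i => a i = t)).card : ℝ) := by
  have hterm : ∀ i ∈ univ,
      |t + h - a i| = |t - a i| + h * esign a t i + (if a i = t then |h| else 0) := by
    intro i _
    rcases lt_trichotomy (a i) t with hlt | heq | hgt
    · have h1 : |t - a i| = t - a i := abs_of_pos (by linarith)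
      have h2 := abs_lt.1 (h1 ▸ hh i hlt.ne)
      rw [abs_of_pos (by linarith [h2.1]), h1]
      simp only [esign, if_pos hlt, if_neg (not_lt.2 hlt.le), if_neg hlt.ne]
      ring
    · have he : esign a t i = 0 := by simp [esign, heq]
      rw [he, heq]
      simp
    · have h1 : |t - a i| = a i - t := by rw [abs_of_neg (by linarith)]; ring
      have h2 := abs_lt.1 (h1 ▸ hh i hgt.ne')
      rw [abs_of_neg (by linarith [h2.2]), h1]
      simp only [esign, if_neg (not_lt.2 hgt.le), if_pos hgt, if_neg hgt.ne']
      ring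
  rw [Finset.sum_congr rfl hterm, Finset.sum_add_distrib, Finset.sum_add_distrib,
    ← Finset.mul_sum]
  congr 1
  rw [← Finset.sum_filter, Finset.sum_const, nsmul_eq_mul, mul_comm]

lemma med_opt {N : ℕ} (a : Fin N → ℝ) (k : Fin N)
    (hc : ((univ.filter (fun i => a i < a k)).card : ℝ)
        = ((univ.filter (fun i => a k < a i)).card : ℝ))
    (s : ℝ) : ∑ i, |a k - a i| ≤ ∑ i, |s - a i| := by
  have key : ∀ i ∈ univ, |a k - a i| + esign a (a k) i * (s - a k) ≤ |s - a i| := by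
    intro i _
    rcases lt_trichotomy (a i) (a k) with hlt | heq | hgt
    · have h1 : |a k - a i| = a k - a i := abs_of_pos (by linarith)
      have he : esign a (a k) i = 1 := by simp [esign, hlt, asymm hlt]
      rw [h1, he]
      have := le_abs_self (s - a i)
      linarith
    · have he : esign a (a k) i = 0 := by simp [esign, heq]
      rw [he, heq]
      simp [abs_nonneg]
    · have h1 : |a k - a i| = a i - a k := by rw [abs_of_neg (by linarith)]; ring
      have he : esign a (a k) i = -1 := by simp [esign, hgt, asymm hgt]
      rw [h1, he]
      have := neg_abs_le (s - a i)
      linarith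
  have hsum := Finset.sum_le_sum key
  rw [Finset.sum_add_distrib, ← Finset.sum_mul] at hsum
  have hz : (∑ i, esign a (a k) i) = 0 := by
    simp only [esign]
    rw [Finset.sum_sub_distrib, Finset.sum_boole, Finset.sum_boole, hc, sub_self]
  rw [hz, zero_mul, add_zero] at hsum
  exact hsum

theorem stmt_16 (N : ℕ) (hN : Odd N) (x y : Fin N → ℝ) (m : ℝ)
    (hdist : ∀ i j : Fin N, i ≠ j → y i - m * x i ≠ y j - m * x j)
    (tstar : ℝ)
    (htstar : ∀ s : ℝ, ∑ i, |tstar - (y i - m * x i)| ≤ ∑ i, |s - (y i - m * x i)|) :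
    HasDerivAt (fun m' : ℝ => ⨅ t : ℝ, ∑ i, |m' * x i + t - y i|)
      ((∑ i ∈ Finset.univ.filter (fun i => 0 < m * x i + tstar - y i), x i) -
       (∑ i ∈ Finset.univ.filter (fun i => m * x i + tstar - y i < 0), x i)) m := by
  obtain ⟨r, hr⟩ := hN
  have hNpos : 0 < N := by omega
  have hne : (univ : Finset (Fin N)).Nonempty := ⟨⟨0, hNpos⟩, mem_univ _⟩
  set a : Fin N → ℝ := fun i => y i - m * x i with ha
  have htstar' : ∀ s : ℝ, ∑ i, |tstar - a i| ≤ ∑ i, |s - a i| := htstar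
  -- Step A: tstar is one of the a i
  obtain ⟨k₀, hk₀⟩ : ∃ k, a k = tstar := by
    by_contra hcon
    push_neg at hcon
    set ε := univ.inf' hne (fun i => |tstar - a i|) with hεdef
    have hεpos : 0 < ε := by
      rw [hεdef, Finset.lt_inf'_iff]
      exact fun i _ => abs_pos.2 (sub_ne_zero.2 fun h => hcon i h.symm)
    have hεle : ∀ i, ε ≤ |tstar - a i| := fun i => Finset.inf'_le _ (mem_univ i)
    have hcard0 : ((univ.filter (fun i => a i = tstar)).card : ℝ) = 0 := by
      norm_cast
      rw [Finset.card_eq_zero, Finset.filter_eq_empty_iff]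
      exact fun i _ => hcon i
    have key : ∀ h : ℝ, |h| < ε → 0 ≤ h * (∑ i, esign a tstar i) := by
      intro h hh
      have hp := pert a tstar h (fun i hi => lt_of_lt_of_le hh (hεle i))
      rw [hcard0, mul_zero, add_zero] at hp
      have h2 := htstar' (tstar + h)
      linarith
    have hp := key (ε/2) (by rw [abs_of_pos (by linarith)]; linarith)
    have hm' := key (-(ε/2)) (by rw [abs_neg, abs_of_pos (by linarith)]; linarith)
    have hc0 : (∑ i, esign a tstar i) = 0 := by nlinarith
    have hsum : (∑ i, esign a tstar i)
        = ((univ.filter (fun i => a i < tstar)).card : ℝ)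
          - ((univ.filter (fun i => tstar < a i)).card : ℝ) := by
      simp only [esign]
      rw [Finset.sum_sub_distrib, Finset.sum_boole, Finset.sum_boole]
    have hPQ : (univ.filter (fun i => a i < tstar)).card
        = (univ.filter (fun i => tstar < a i)).card := by
      rw [hsum] at hc0
      exact_mod_cast sub_eq_zero.1 hc0
    have hflip : univ.filter (fun i => tstar < a i)
        = univ.filter (fun i => ¬ a i < tstar) := by
      apply Finset.filter_congr
      intro i _
      simp only [not_lt]
      constructor
      · exact le_of_lt
      · intro h; exact lt_of_le_of_ne h fun e => hcon i e.symm
    have htot : (univ.filter (fun i => a i < tstar)).card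
        + (univ.filter (fun i => ¬ a i < tstar)).card = N := by
      rw [Finset.card_filter_add_card_filter_not]
      simp
    rw [hflip] at hPQ
    omega
  -- Step B: equal counts on both sides
  have hdista : ∀ i, i ≠ k₀ → a i ≠ tstar := fun i hi => by
    rw [← hk₀]; exact hdist i k₀ hi
  have heqfilter : univ.filter (fun i => a i = tstar) = {k₀} := by
    ext i
    simp only [mem_filter, mem_univ, true_and, mem_singleton]
    constructor
    · intro h; by_contra hne'; exact hdista i hne' h
    · rintro rfl; exact hk₀
  have hPQ : (univ.filter (fun i => a i < tstar)).card
      = (univ.filter (fun i => tstar < a i)).card := by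
    set ε := univ.inf' hne (fun i => if i = k₀ then 1 else |tstar - a i|) with hεdef
    have hεpos : 0 < ε := by
      rw [hεdef, Finset.lt_inf'_iff]
      intro i _
      split
      · norm_num
      · next hik => exact abs_pos.2 (sub_ne_zero.2 fun e => hdista i hik e.symm)
    have hεle : ∀ i, a i ≠ tstar → ε ≤ |tstar - a i| := by
      intro i hi
      have hik : i ≠ k₀ := fun e => hi (e ▸ hk₀)
      have := Finset.inf'_le (fun i => if i = k₀ then (1:ℝ) else |tstar - a i|) (mem_univ i)
      rwa [if_neg hik] at this
    have key : ∀ h : ℝ, |h| < ε → 0 ≤ h * (∑ i, esign a tstar i) + |h| := by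
      intro h hh
      have hp := pert a tstar h (fun i hi => lt_of_lt_of_le hh (hεle i hi))
      rw [heqfilter] at hp
      simp only [Finset.card_singleton, Nat.cast_one, mul_one] at hp
      have h2 := htstar' (tstar + h)
      linarith
    have hp1 := key (ε/2) (by rw [abs_of_pos (by linarith)]; linarith)
    have hp2 := key (-(ε/2)) (by rw [abs_neg, abs_of_pos (by linarith)]; linarith)
    rw [abs_of_pos (by linarith)] at hp1
    rw [abs_neg, abs_of_pos (by linarith)] at hp2
    have hcle : -1 ≤ (∑ i, esign a tstar i) ∧ (∑ i, esign a tstar i) ≤ 1 := by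
      constructor <;> nlinarith
    have hsum : (∑ i, esign a tstar i)
        = ((univ.filter (fun i => a i < tstar)).card : ℝ)
          - ((univ.filter (fun i => tstar < a i)).card : ℝ) := by
      simp only [esign]
      rw [Finset.sum_sub_distrib, Finset.sum_boole, Finset.sum_boole]
    rw [hsum] at hcle
    have hb1 : (univ.filter (fun i => a i < tstar)).card
        ≤ (univ.filter (fun i => tstar < a i)).card + 1 := by
      have h2 : ((univ.filter (fun i => a i < tstar)).card : ℝ)
          ≤ ((univ.filter (fun i => tstar < a i)).card : ℝ) + 1 := by linarith [hcle.2]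
      exact_mod_cast h2
    have hb2 : (univ.filter (fun i => tstar < a i)).card
        ≤ (univ.filter (fun i => a i < tstar)).card + 1 := by
      have h2 : ((univ.filter (fun i => tstar < a i)).card : ℝ)
          ≤ ((univ.filter (fun i => a i < tstar)).card : ℝ) + 1 := by linarith [hcle.1]
      exact_mod_cast h2
    have hflip : univ.filter (fun i => ¬ a i < tstar)
        = insert k₀ (univ.filter (fun i => tstar < a i)) := by
      ext i
      simp only [mem_filter, mem_univ, true_and, mem_insert, not_lt]
      constructor
      · intro h
        rcases eq_or_lt_of_le h with heq | hlt
        · left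
          by_contra hik
          exact hdista i hik heq.symm
        · right; exact hlt
      · rintro (rfl | h)
        · rw [hk₀]
        · exact h.le
    have hk0notin : k₀ ∉ univ.filter (fun i => tstar < a i) := by
      simp [hk₀]
    have htot : (univ.filter (fun i => a i < tstar)).card
        + (univ.filter (fun i => ¬ a i < tstar)).card = N := by
      rw [Finset.card_filter_add_card_filter_not]
      simp
    rw [hflip, Finset.card_insert_of_notMem hk0notin] at htot
    omega
  have hc0 : (∑ i, esign a tstar i) = 0 := by
    simp only [esign]
    rw [Finset.sum_sub_distrib, Finset.sum_boole, Finset.sum_boole, hPQ, sub_self]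
  -- derivative of the local affine model
  have hL : HasDerivAt (fun m' => ∑ i, esign a tstar i * ((y k₀ - y i) + m' * (x i - x k₀)))
      (∑ i, esign a tstar i * (x i - x k₀)) m := by
    apply HasDerivAt.fun_sum
    intro i _
    have h1 : HasDerivAt (fun m' : ℝ => (y k₀ - y i) + m' * (x i - x k₀)) (x i - x k₀) m := by
      simpa using ((hasDerivAt_id m).mul_const (x i - x k₀)).const_add (y k₀ - y i)
    simpa using h1.const_mul (esign a tstar i)
  have hterm_m : ∀ i, (y k₀ - y i) + m * (x i - x k₀) = tstar - a i := by
    intro i; rw [← hk₀]; simp only [ha]; ring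
  have hev : ∀ᶠ m' in nhds m, ∀ i, i ≠ k₀ →
      0 < esign a tstar i * ((y k₀ - y i) + m' * (x i - x k₀)) := by
    rw [Filter.eventually_all]
    intro i
    by_cases hik : i = k₀
    · exact Filter.Eventually.of_forall fun m' h => absurd hik h
    · have hcont : ContinuousAt
          (fun m' : ℝ => esign a tstar i * ((y k₀ - y i) + m' * (x i - x k₀))) m := by
        fun_prop
      have hpos : 0 < esign a tstar i * ((y k₀ - y i) + m * (x i - x k₀)) := by
        rw [hterm_m i]
        rcases lt_or_gt_of_ne (hdista i hik) with hlt | hgt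
        · have he : esign a tstar i = 1 := by simp [esign, hlt, asymm hlt]
          rw [he]; linarith
        · have he : esign a tstar i = -1 := by simp [esign, hgt, asymm hgt]
          rw [he]; nlinarith
      have := hcont.eventually_mem (Ioi_mem_nhds hpos)
      filter_upwards [this] with m' hm'
      exact fun _ => hm'
  -- local equality of J with the affine model
  have hJL : (fun m' : ℝ => ⨅ t : ℝ, ∑ i, |m' * x i + t - y i|) =ᶠ[nhds m]
      (fun m' => ∑ i, esign a tstar i * ((y k₀ - y i) + m' * (x i - x k₀))) := by
    filter_upwards [hev] with m' hm'
    set a' : Fin N → ℝ := fun i => y i - m' * x i with ha'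
    have hterm' : ∀ i, (y k₀ - y i) + m' * (x i - x k₀) = a' k₀ - a' i := by
      intro i; simp only [ha']; ring
    have hmin : ∀ s : ℝ,
        (∑ i, |m' * x i + (y k₀ - m' * x k₀) - y i|) ≤ ∑ i, |m' * x i + s - y i| := by
      intro s
      have hcards : ((univ.filter (fun i => a' i < a' k₀)).card : ℝ)
          = ((univ.filter (fun i => a' k₀ < a' i)).card : ℝ) := by
        have hfeq1 : univ.filter (fun i => a' i < a' k₀)
            = univ.filter (fun i => a i < tstar) := by
          apply Finset.filter_congr
          intro i _
          by_cases hik : i = k₀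
          · subst hik; simp [hk₀]
          · have h := hm' i hik
            rw [hterm' i] at h
            rcases lt_or_gt_of_ne (hdista i hik) with hlt | hgt
            · have he : esign a tstar i = 1 := by simp [esign, hlt, asymm hlt]
              rw [he, one_mul] at h
              exact iff_of_true (by linarith) hlt
            · have he : esign a tstar i = -1 := by simp [esign, hgt, asymm hgt]
              rw [he] at h
              have hlt' : a' k₀ - a' i < 0 := by nlinarith
              exact iff_of_false (by linarith) (asymm hgt)
        have hfeq2 : univ.filter (fun i => a' k₀ < a' i)
            = univ.filter (fun i => tstar < a i) := by
          apply Finset.filter_congr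
          intro i _
          by_cases hik : i = k₀
          · subst hik; simp [hk₀]
          · have h := hm' i hik
            rw [hterm' i] at h
            rcases lt_or_gt_of_ne (hdista i hik) with hlt | hgt
            · have he : esign a tstar i = 1 := by simp [esign, hlt, asymm hlt]
              rw [he, one_mul] at h
              exact iff_of_false (by linarith) (asymm hlt)
            · have he : esign a tstar i = -1 := by simp [esign, hgt, asymm hgt]
              rw [he] at h
              have hlt' : a' k₀ - a' i < 0 := by nlinarith
              exact iff_of_true (by linarith) hgt
        rw [hfeq1, hfeq2]
        exact_mod_cast congrArg Nat.cast hPQ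
      have h1 : (∑ i, |m' * x i + (y k₀ - m' * x k₀) - y i|) = ∑ i, |a' k₀ - a' i| :=
        Finset.sum_congr rfl fun i _ => by congr 1; simp only [ha']; ring
      have h2 : (∑ i, |m' * x i + s - y i|) = ∑ i, |s - a' i| :=
        Finset.sum_congr rfl fun i _ => by congr 1; simp only [ha']; ring
      rw [h1, h2]
      exact med_opt a' k₀ hcards s
    have hbdd : BddBelow (Set.range fun t : ℝ => ∑ i, |m' * x i + t - y i|) := by
      refine ⟨0, ?_⟩
      rintro v ⟨t, rfl⟩
      positivity
    have hiInf : (⨅ t : ℝ, ∑ i, |m' * x i + t - y i|)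
        = ∑ i, |m' * x i + (y k₀ - m' * x k₀) - y i| :=
      le_antisymm (ciInf_le hbdd _) (le_ciInf hmin)
    rw [hiInf]
    apply Finset.sum_congr rfl
    intro i _
    have habs : m' * x i + (y k₀ - m' * x k₀) - y i = (y k₀ - y i) + m' * (x i - x k₀) := by
      ring
    rw [habs]
    by_cases hik : i = k₀
    · rw [hik, show (y k₀ - y k₀) + m' * (x k₀ - x k₀) = 0 by ring]
      simp [esign, hk₀]
    · have h := hm' i hik
      rcases lt_or_gt_of_ne (hdista i hik) with hlt | hgt
      · have he : esign a tstar i = 1 := by simp [esign, hlt, asymm hlt]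
        rw [he, one_mul] at h ⊢
        exact abs_of_pos h
      · have he : esign a tstar i = -1 := by simp [esign, hgt, asymm hgt]
        rw [he] at h ⊢
        have hneg : (y k₀ - y i) + m' * (x i - x k₀) < 0 := by nlinarith
        rw [abs_of_neg hneg]; ring
  -- identify the derivative value
  have hD : ((∑ i ∈ univ.filter (fun i => 0 < m * x i + tstar - y i), x i)
      - (∑ i ∈ univ.filter (fun i => m * x i + tstar - y i < 0), x i))
      = ∑ i, esign a tstar i * (x i - x k₀) := by
    have hf1 : univ.filter (fun i => 0 < m * x i + tstar - y i)
        = univ.filter (fun i => a i < tstar) := by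
      apply Finset.filter_congr
      intro i _
      simp only [ha]
      constructor <;> intro h <;> linarith
    have hf2 : univ.filter (fun i => m * x i + tstar - y i < 0)
        = univ.filter (fun i => tstar < a i) := by
      apply Finset.filter_congr
      intro i _
      simp only [ha]
      constructor <;> intro h <;> linarith
    have hsplit : ∀ i ∈ univ, esign a tstar i * (x i - x k₀)
        = ((if a i < tstar then x i else 0) - (if tstar < a i then x i else 0))
          - esign a tstar i * x k₀ := by
      intro i _
      simp only [esign]
      rcases lt_trichotomy (a i) tstar with h | h | h
      · rw [if_pos h, if_pos h, if_neg (asymm h), if_neg (asymm h)]; ring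
      · rw [if_neg (by rw [h]; exact lt_irrefl _), if_neg (by rw [h]; exact lt_irrefl _),
          if_neg (by rw [h]; exact lt_irrefl _), if_neg (by rw [h]; exact lt_irrefl _)]
        ring
      · rw [if_neg (asymm h), if_neg (asymm h), if_pos h, if_pos h]; ring
    rw [hf1, hf2, Finset.sum_congr rfl hsplit, Finset.sum_sub_distrib, Finset.sum_sub_distrib,
      ← Finset.sum_mul, hc0, zero_mul, sub_zero, ← Finset.sum_filter, ← Finset.sum_filter]
  rw [hD]
  exact hL.congr_of_eventuallyEq hJL
end

section
/- A minimizer of the LAD line fitting problem passes through at least two data points: if the x_i are not all equal and N ≥ 2, then there exists a minimizer (m*, t*) of f(m,t) = Σ_i |m x_i + t - y_i| and indices i ≠ j with x_i ≠ x_j such that m* x_i + t* = y_i and m* x_j + t* = y_j. -/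
-- |r+a| + |r-a| = 2|r| when |a| ≤ |r|
lemma abs_pair (r a : ℝ) (h : |a| ≤ |r|) : |r + a| + |r - a| = 2 * |r| := by
  obtain ⟨h1, h2⟩ := abs_le.mp h
  rcases le_or_gt 0 r with hr | hr
  · rw [abs_of_nonneg hr] at h1 h2
    rw [abs_of_nonneg (by linarith), abs_of_nonneg (by linarith), abs_of_nonneg hr]; ring
  · rw [abs_of_neg hr] at h1 h2
    rw [abs_of_nonpos (by linarith), abs_of_nonpos (by linarith), abs_of_neg hr]; ring

lemma improve (N : ℕ) (x y : Fin N → ℝ) (m t x0 : ℝ)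
    (hmin : ∀ a b : ℝ, ∑ i, |m * x i + t - y i| ≤ ∑ i, |a * x i + b - y i|)
    (htight : ∀ i, m * x i + t = y i → x i = x0)
    (hne : ∃ k, x k ≠ x0) :
    ∃ m' t' : ℝ,
      (∀ a b : ℝ, ∑ i, |m' * x i + t' - y i| ≤ ∑ i, |a * x i + b - y i|) ∧
      (∀ i, m * x i + t = y i → m' * x i + t' = y i) ∧
      ∃ k, x k ≠ x0 ∧ m' * x k + t' = y k := by
  classical
  set r : Fin N → ℝ := fun i => m * x i + t - y i with hr
  set A : Finset (Fin N) := Finset.univ.filter (fun i => x i ≠ x0) with hA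
  have hAne : A.Nonempty := by
    obtain ⟨k, hk⟩ := hne
    exact ⟨k, by simp [hA, hk]⟩
  obtain ⟨k, hkA, hkmin⟩ :=
    A.exists_min_image (fun i => |(y i - m * x i - t) / (x i - x0)|) hAne
  have hkx : x k ≠ x0 := by simpa [hA] using hkA
  set e : ℝ := (y k - m * x k - t) / (x k - x0) with he
  -- key bound : for all i, |e * (x i - x0)| ≤ |r i|
  have key : ∀ i, |e * (x i - x0)| ≤ |r i| := by
    intro i
    by_cases hix : x i = x0
    · simp [hix, abs_nonneg]
    · have hiA : i ∈ A := by simp [hA, hix]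
      have h1 := hkmin i hiA
      have hxi : x i - x0 ≠ 0 := sub_ne_zero.mpr hix
      have : |e| * |x i - x0| ≤ |(y i - m * x i - t) / (x i - x0)| * |x i - x0| :=
        mul_le_mul_of_nonneg_right h1 (abs_nonneg _)
      rw [abs_mul]
      calc |e| * |x i - x0| ≤ |(y i - m * x i - t) / (x i - x0)| * |x i - x0| := this
        _ = |y i - m * x i - t| := by
            rw [abs_div, div_mul_cancel₀ _ (abs_ne_zero.mpr hxi)]
        _ = |r i| := by
            rw [hr, show y i - m * x i - t = -(m * x i + t - y i) by ring, abs_neg]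
  -- residual identity
  have hres : ∀ (s : ℝ) i, (m + s) * x i + (t - s * x0) - y i = r i + s * (x i - x0) := by
    intro s i; rw [hr]; ring
  -- sum identity
  have hsum : ∑ i, |(m + e) * x i + (t - e * x0) - y i| +
      ∑ i, |(m + (-e)) * x i + (t - (-e) * x0) - y i| = 2 * ∑ i, |r i| := by
    rw [← Finset.sum_add_distrib, Finset.mul_sum]
    apply Finset.sum_congr rfl
    intro i _
    rw [hres, hres]
    have := abs_pair (r i) (e * (x i - x0)) (key i)
    rw [neg_mul, ← sub_eq_add_neg] at *
    linarith [this]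
  have hplus : ∑ i, |r i| ≤ ∑ i, |(m + e) * x i + (t - e * x0) - y i| := hmin _ _
  have hminus : ∑ i, |r i| ≤ ∑ i, |(m + (-e)) * x i + (t - (-e) * x0) - y i| := hmin _ _
  have heq : ∑ i, |(m + e) * x i + (t - e * x0) - y i| = ∑ i, |r i| := by linarith
  refine ⟨m + e, t - e * x0, ?_, ?_, ?_⟩
  · intro a b; rw [heq]; exact hmin a b
  · intro i hi
    have hx0 : x i = x0 := htight i hi
    have : (m + e) * x i + (t - e * x0) - y i = r i + e * (x i - x0) := hres e i
    rw [hx0] at this ⊢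
    have hri : r i = 0 := by rw [hr]; rw [hx0] at hi; linarith
    nlinarith [this, hri]
  · refine ⟨k, hkx, ?_⟩
    have hxk : x k - x0 ≠ 0 := sub_ne_zero.mpr hkx
    have hcan : e * (x k - x0) = y k - m * x k - t := div_mul_cancel₀ _ hxk
    have := hres e k
    rw [hr] at this
    nlinarith [this, hcan]

lemma exists_min (N : ℕ) (x y : Fin N → ℝ) (hx : ∃ i j : Fin N, x i ≠ x j) :
    ∃ m t : ℝ, ∀ a b : ℝ, ∑ i, |m * x i + t - y i| ≤ ∑ i, |a * x i + b - y i| := by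
  classical
  set g : ℝ × ℝ → ℝ := fun p => ∑ i, |p.1 * x i + p.2 - y i| with hg
  have hgc : Continuous g := by
    apply continuous_finset_sum
    intro i _
    exact (continuous_abs.comp (by fun_prop))
  obtain ⟨i0, j0, hij⟩ := hx
  set d : ℝ := |x i0 - x j0| with hd
  have hdpos : 0 < d := abs_pos.mpr (sub_ne_zero.mpr hij)
  set C0 : ℝ := ∑ i, |y i| with hC0
  have hC0nn : 0 ≤ C0 := Finset.sum_nonneg fun i _ => abs_nonneg _
  have hg0 : g (0, 0) = C0 := by
    simp [hg, hC0]
  set R1 : ℝ := (2 * C0 + |y i0 - y j0|) / d with hR1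
  set R2 : ℝ := C0 + R1 * |x i0| + |y i0| with hR2
  set K : Set (ℝ × ℝ) := {p | g p ≤ C0} with hK
  have hterm : ∀ p ∈ K, ∀ i, |p.1 * x i + p.2 - y i| ≤ C0 := by
    intro p hp i
    have hp' : ∑ j, |p.1 * x j + p.2 - y j| ≤ C0 := hp
    exact le_trans
      (Finset.single_le_sum (f := fun j => |p.1 * x j + p.2 - y j|)
        (fun j _ => abs_nonneg _) (Finset.mem_univ i)) hp'
  have hbound1 : ∀ p ∈ K, |p.1| ≤ R1 := by
    intro p hp
    have h1 : |p.1 * x i0 + p.2 - y i0| ≤ C0 := hterm p hp i0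
    have h2 : |p.1 * x j0 + p.2 - y j0| ≤ C0 := hterm p hp j0
    have key : |p.1| * d ≤ 2 * C0 + |y i0 - y j0| := by
      have : |p.1| * d = |p.1 * (x i0 - x j0)| := by rw [abs_mul, hd]
      rw [this]
      have expand : p.1 * (x i0 - x j0) =
          (p.1 * x i0 + p.2 - y i0) - (p.1 * x j0 + p.2 - y j0) + (y i0 - y j0) := by ring
      rw [expand]
      calc |(p.1 * x i0 + p.2 - y i0) - (p.1 * x j0 + p.2 - y j0) + (y i0 - y j0)|
          ≤ |(p.1 * x i0 + p.2 - y i0) - (p.1 * x j0 + p.2 - y j0)| + |y i0 - y j0| :=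
            abs_add_le _ _
        _ ≤ |p.1 * x i0 + p.2 - y i0| + |p.1 * x j0 + p.2 - y j0| + |y i0 - y j0| := by
            linarith [abs_sub (p.1 * x i0 + p.2 - y i0) (p.1 * x j0 + p.2 - y j0)]
        _ ≤ 2 * C0 + |y i0 - y j0| := by linarith
    rw [hR1, le_div_iff₀ hdpos]
    exact key
  have hbound2 : ∀ p ∈ K, |p.2| ≤ R2 := by
    intro p hp
    have h1 : |p.1 * x i0 + p.2 - y i0| ≤ C0 := hterm p hp i0
    have hp1 : |p.1| ≤ R1 := hbound1 p hp
    have expand : p.2 = (p.1 * x i0 + p.2 - y i0) - p.1 * x i0 + y i0 := by ring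
    calc |p.2| = |(p.1 * x i0 + p.2 - y i0) - p.1 * x i0 + y i0| := by rw [← expand]
      _ ≤ |(p.1 * x i0 + p.2 - y i0) - p.1 * x i0| + |y i0| := abs_add_le _ _
      _ ≤ |p.1 * x i0 + p.2 - y i0| + |p.1 * x i0| + |y i0| := by
          linarith [abs_sub (p.1 * x i0 + p.2 - y i0) (p.1 * x i0)]
      _ ≤ C0 + |p.1| * |x i0| + |y i0| := by rw [abs_mul]; linarith
      _ ≤ R2 := by
          rw [hR2]
          have := mul_le_mul_of_nonneg_right hp1 (abs_nonneg (x i0))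
          linarith
  set R : ℝ := max R1 R2 with hRdef
  have hKsub : K ⊆ Set.Icc ((-R, -R) : ℝ × ℝ) (R, R) := by
    intro p hp
    have h1 := abs_le.mp ((hbound1 p hp).trans (le_max_left R1 R2))
    have h2 := abs_le.mp ((hbound2 p hp).trans (le_max_right R1 R2))
    constructor
    · exact ⟨h1.1, h2.1⟩
    · exact ⟨h1.2, h2.2⟩
  have hKclosed : IsClosed K := isClosed_le hgc continuous_const
  have hKcpt : IsCompact K := (isCompact_Icc).of_isClosed_subset hKclosed hKsub
  have hKne : K.Nonempty := ⟨(0, 0), by rw [hK, Set.mem_setOf_eq, hg0]⟩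
  obtain ⟨p, hpK, hpmin⟩ := hKcpt.exists_isMinOn hKne hgc.continuousOn
  refine ⟨p.1, p.2, ?_⟩
  intro a b
  have hgp : g p ≤ C0 := hpK
  by_cases hq : (a, b) ∈ K
  · exact hpmin hq
  · have : C0 < g (a, b) := not_le.mp hq
    calc g ⟨p.1, p.2⟩ = g p := rfl
      _ ≤ C0 := hgp
      _ ≤ g (a, b) := le_of_lt this

lemma tight_case (N : ℕ) (x y : Fin N → ℝ) (hx : ∃ i j : Fin N, x i ≠ x j)
    (m t : ℝ)
    (hmin : ∀ a b : ℝ, ∑ i, |m * x i + t - y i| ≤ ∑ i, |a * x i + b - y i|)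
    (i0 : Fin N) (hti0 : m * x i0 + t = y i0) :
    ∃ m' t' : ℝ,
      (∀ a b : ℝ, ∑ i, |m' * x i + t' - y i| ≤ ∑ i, |a * x i + b - y i|) ∧
      ∃ i j : Fin N, i ≠ j ∧ x i ≠ x j ∧
        m' * x i + t' = y i ∧ m' * x j + t' = y j := by
  classical
  have hne : ∃ k, x k ≠ x i0 := by
    obtain ⟨a, b, hab⟩ := hx
    by_cases ha : x a = x i0
    · exact ⟨b, fun hb => hab (by rw [ha, hb])⟩
    · exact ⟨a, ha⟩
  by_cases h : ∃ j, (m * x j + t = y j) ∧ x j ≠ x i0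
  · obtain ⟨j, htj, hxj⟩ := h
    refine ⟨m, t, hmin, i0, j, ?_, fun hh => hxj (by rw [hh]), hti0, htj⟩
    intro hh; exact hxj (by rw [hh])
  · have htight : ∀ j, m * x j + t = y j → x j = x i0 := by
      intro j hj
      by_contra hne'
      exact h ⟨j, hj, hne'⟩
    obtain ⟨m', t', hmin', hpres, k, hkx, hkt⟩ := improve N x y m t (x i0) hmin htight hne
    refine ⟨m', t', hmin', i0, k, ?_, fun hh => hkx (by rw [← hh]), hpres i0 hti0, hkt⟩
    intro hh; exact hkx (by rw [← hh])

theorem stmt_17 (N : ℕ) (hN : 2 ≤ N) (x y : Fin N → ℝ)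
    (hx : ∃ i j : Fin N, x i ≠ x j) :
    ∃ m t : ℝ,
      (∀ m' t' : ℝ, ∑ i, |m * x i + t - y i| ≤ ∑ i, |m' * x i + t' - y i|) ∧
      ∃ i j : Fin N, i ≠ j ∧ x i ≠ x j ∧
        m * x i + t = y i ∧ m * x j + t = y j := by
  classical
  obtain ⟨m, t, hmin⟩ := exists_min N x y hx
  by_cases h : ∃ i, m * x i + t = y i
  · obtain ⟨i0, hti0⟩ := h
    exact tight_case N x y hx m t hmin i0 hti0
  · obtain ⟨a, b, hab⟩ := hx
    have htight : ∀ i, m * x i + t = y i → x i = x a := fun i hi => absurd ⟨i, hi⟩ h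
    have hne : ∃ k, x k ≠ x a := ⟨b, fun hb => hab (by rw [hb])⟩
    obtain ⟨m', t', hmin', _, k, _, hkt⟩ := improve N x y m t (x a) hmin htight hne
    exact tight_case N x y ⟨a, b, hab⟩ m' t' hmin' k hkt
end
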